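/- Let 𝔯 be a 3-dimensional solvable real Lie algebra with basis (c₁, c₂, c₃). Suppose D_E, D_F, D_G : 𝔯 → 𝔯 are Lie algebra derivations of 𝔯 satisfying D_E c₁ = −c₂, D_E c₂ = c₁, D_E c₃ = 0, D_F c₁ = −c₃, D_F c₂ = 0, D_F c₃ = c₁, D_G c₁ = 0, D_G c₂ = −c₃, D_G c₃ = c₂. Then 𝔯 is abelian: [x, y] = 0 for all x, y ∈ 𝔯. -/

import Mathlib

/-- Let `𝔯` be a 3-dimensional solvable real Lie algebra with basis `(c₁, c₂, c₃)`
(`b 0 = c₁`, `b 1 = c₂`, `b 2 = c₃`), and let `D_E, D_F, D_G` be derivations of `𝔯`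
acting on the basis as the standard basis `E, F, G` of `𝔰𝔬(3)` does in its unique
irreducible 3-dimensional representation. Then `𝔯` is abelian. -/
theorem solvable_with_so3_derivations_is_abelian
    (L : Type) [LieRing L] [LieAlgebra ℝ L] [LieAlgebra.IsSolvable L]
    (b : Module.Basis (Fin 3) ℝ L)
    (DE DF DG : LieDerivation ℝ L L)
    (hE1 : DE (b 0) = -b 1) (hE2 : DE (b 1) = b 0) (hE3 : DE (b 2) = 0)
    (hF1 : DF (b 0) = -b 2) (hF2 : DF (b 1) = 0) (hF3 : DF (b 2) = b 0)
    (hG1 : DG (b 0) = 0) (hG2 : DG (b 1) = -b 2) (hG3 : DG (b 2) = b 1) :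
    ∀ x y : L, ⁅x, y⁆ = 0 := by
  have hrep : ∀ z : L, z = b.repr z 0 • b 0 + b.repr z 1 • b 1 + b.repr z 2 • b 2 := by
    intro z
    have := b.sum_repr z
    rw [Fin.sum_univ_three] at this
    exact this.symm
  have expand : ∀ (D : LieDerivation ℝ L L) (z : L),
      D z = b.repr z 0 • D (b 0) + b.repr z 1 • D (b 1) + b.repr z 2 • D (b 2) := by
    intro D z
    conv_lhs => rw [hrep z]
    simp
  set u := ⁅b 0, b 1⁆ with hu_def
  set v := ⁅b 1, b 2⁆ with hv_def
  set w := ⁅b 2, b 0⁆ with hw_def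
  have dEu : DE u = 0 := by
    rw [hu_def, DE.apply_lie_eq_add, hE1, hE2]; simp
  have dFu : DF u = v := by
    rw [hu_def, DF.apply_lie_eq_add, hF1, hF2, hv_def, lie_zero, zero_add, neg_lie,
      ← lie_skew (b 2) (b 1), neg_neg]
  have dGv : DG v = 0 := by
    rw [hv_def, DG.apply_lie_eq_add, hG2, hG3]; simp
  have dEv : DE v = -w := by
    rw [hv_def, DE.apply_lie_eq_add, hE2, hE3, hw_def, lie_zero, zero_add,
      ← lie_skew (b 2) (b 0), neg_neg]
  have dFw : DF w = 0 := by
    rw [hw_def, DF.apply_lie_eq_add, hF1, hF3]; simp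
  -- u is a multiple of b 2
  have e1 := expand DE u
  rw [dEu, hE1, hE2, hE3] at e1
  have h10 := congrArg (fun z => b.repr z 0) e1
  have h11 := congrArg (fun z => b.repr z 1) e1
  simp [Finsupp.single_apply] at h10 h11
  have hu : u = b.repr u 2 • b 2 := by
    conv_lhs => rw [hrep u]
    rw [show b.repr u 0 = 0 by linarith, show b.repr u 1 = 0 by linarith]
    simp
  -- v is a multiple of b 0
  have e2 := expand DG v
  rw [dGv, hG1, hG2, hG3] at e2
  have h21 := congrArg (fun z => b.repr z 1) e2
  have h22 := congrArg (fun z => b.repr z 2) e2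
  simp [Finsupp.single_apply] at h21 h22
  have hv : v = b.repr v 0 • b 0 := by
    conv_lhs => rw [hrep v]
    rw [show b.repr v 1 = 0 by linarith, show b.repr v 2 = 0 by linarith]
    simp
  -- w is a multiple of b 1
  have e3 := expand DF w
  rw [dFw, hF1, hF2, hF3] at e3
  have h30 := congrArg (fun z => b.repr z 0) e3
  have h32 := congrArg (fun z => b.repr z 2) e3
  simp [Finsupp.single_apply] at h30 h32
  have hw : w = b.repr w 1 • b 1 := by
    conv_lhs => rw [hrep w]
    rw [show b.repr w 0 = 0 by linarith, show b.repr w 2 = 0 by linarith]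
    simp
  set l := b.repr u 2 with hl_def
  have hul : u = l • b 2 := hu
  have hvl : v = l • b 0 := by
    have h := dFu
    rw [hul, map_smul, hF3] at h
    rw [← h]
  have hwl : w = l • b 1 := by
    have h := dEv
    rw [hvl, map_smul, hE1] at h
    rw [smul_neg] at h
    exact (neg_inj.mp h).symm
  -- Solvability forces l = 0
  have hl0 : l = 0 := by
    by_contra hl
    have m01 : u ∈ ⁅(⊤ : LieIdeal ℝ L), (⊤ : LieIdeal ℝ L)⁆ :=
      LieSubmodule.lie_mem_lie trivial trivial
    have m12 : v ∈ ⁅(⊤ : LieIdeal ℝ L), (⊤ : LieIdeal ℝ L)⁆ :=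
      LieSubmodule.lie_mem_lie trivial trivial
    have m20 : w ∈ ⁅(⊤ : LieIdeal ℝ L), (⊤ : LieIdeal ℝ L)⁆ :=
      LieSubmodule.lie_mem_lie trivial trivial
    have hb0 : b 0 ∈ ⁅(⊤ : LieIdeal ℝ L), (⊤ : LieIdeal ℝ L)⁆ := by
      have h0 : b 0 = l⁻¹ • v := by rw [hvl, smul_smul, inv_mul_cancel₀ hl, one_smul]
      rw [h0]; exact Submodule.smul_mem _ _ m12
    have hb1 : b 1 ∈ ⁅(⊤ : LieIdeal ℝ L), (⊤ : LieIdeal ℝ L)⁆ := by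
      have h1 : b 1 = l⁻¹ • w := by rw [hwl, smul_smul, inv_mul_cancel₀ hl, one_smul]
      rw [h1]; exact Submodule.smul_mem _ _ m20
    have hb2 : b 2 ∈ ⁅(⊤ : LieIdeal ℝ L), (⊤ : LieIdeal ℝ L)⁆ := by
      have h2 : b 2 = l⁻¹ • u := by rw [hul, smul_smul, inv_mul_cancel₀ hl, one_smul]
      rw [h2]; exact Submodule.smul_mem _ _ m01
    have htop : ⁅(⊤ : LieIdeal ℝ L), (⊤ : LieIdeal ℝ L)⁆ = ⊤ := by
      rw [eq_top_iff]
      intro x _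
      rw [hrep x]
      exact Submodule.add_mem _ (Submodule.add_mem _
        (Submodule.smul_mem _ _ hb0) (Submodule.smul_mem _ _ hb1))
        (Submodule.smul_mem _ _ hb2)
    have hds : ∀ k, LieAlgebra.derivedSeries ℝ L k = ⊤ := by
      intro k
      induction k with
      | zero => rfl
      | succ n ih =>
        rw [LieAlgebra.derivedSeries_def, LieAlgebra.derivedSeriesOfIdeal_succ,
          ← LieAlgebra.derivedSeries_def, ih, htop]
    obtain ⟨k, hk⟩ := LieAlgebra.IsSolvable.solvable (R := ℝ) (L := L)
    rw [hds k] at hk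
    have : b 0 ∈ (⊥ : LieIdeal ℝ L) := hk ▸ trivial
    rw [LieSubmodule.mem_bot] at this
    exact b.ne_zero 0 this
  -- brackets of basis vectors vanish
  have k01 : ⁅b 0, b 1⁆ = 0 := by rw [← hu_def, hul, hl0, zero_smul]
  have k12 : ⁅b 1, b 2⁆ = 0 := by rw [← hv_def, hvl, hl0, zero_smul]
  have k20 : ⁅b 2, b 0⁆ = 0 := by rw [← hw_def, hwl, hl0, zero_smul]
  have k10 : ⁅b 1, b 0⁆ = 0 := by rw [← lie_skew, k01, neg_zero]
  have k21 : ⁅b 2, b 1⁆ = 0 := by rw [← lie_skew, k12, neg_zero]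
  have k02 : ⁅b 0, b 2⁆ = 0 := by rw [← lie_skew, k20, neg_zero]
  have k00 : ⁅b 0, b 0⁆ = 0 := lie_self _
  have k11 : ⁅b 1, b 1⁆ = 0 := lie_self _
  have k22 : ⁅b 2, b 2⁆ = 0 := lie_self _
  intro x y
  rw [hrep x, hrep y]
  simp only [add_lie, lie_add, smul_lie, lie_smul, k00, k01, k02, k10, k11, k12, k20, k21, k22,
    smul_zero, add_zero, zero_add]
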